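/- Let {(R'_1,B'_1),…,(R'_m,B'_m)} ⊆ EC be a collection of the collapsed ECs that are maximal end components of M. Then no representative state s_{(R'_i,B'_i)} belongs to the state set R^c of any end component (R^c, B^c) of the collapsed MDP M^c. -/

import Mathlib

/-!
STATEMENT 5: If some of the collapsed ECs (R'_i,B'_i) are maximal end components
of M, then none of their representative states belongs to the state set of any end
component of the collapsed MDP M^c.
-/

open Finset
open scoped Classical

/-- A finite MDP with per-state disjoint action sets: `stOf` assigns to every
action the unique state at which it is available. -/
structure MDP (S A : Type) [Fintype S] [DecidableEq S] [Fintype A] [DecidableEq A] where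
  act : S → Finset A
  act_ne : ∀ s, (act s).Nonempty
  stOf : A → S
  stOf_spec : ∀ s a, a ∈ act s → stOf a = s
  P : S → A → S → ℝ
  P_nonneg : ∀ s a s', 0 ≤ P s a s'
  P_sum : ∀ s, ∀ a ∈ act s, ∑ s', P s a s' = 1

/-- A finite path of length `N`: states `st 0, …, st N` and actions
`ac 0, …, ac (N−1)`, each action available and each transition of positive
probability. -/
def IsPath {σ α : Type*} (act : σ → Finset α) (P : σ → α → σ → ℝ)
    (N : ℕ) (st : ℕ → σ) (ac : ℕ → α) : Prop :=
  ∀ k, k < N → ac k ∈ act (st k) ∧ 0 < P (st k) (ac k) (st (k + 1))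

/-- One step inside the sub-system `(R, B)`. -/
def stepIn {σ α : Type*} (act : σ → Finset α) (P : σ → α → σ → ℝ)
    (R : Finset σ) (B : Finset α) (x y : σ) : Prop :=
  x ∈ R ∧ y ∈ R ∧ ∃ a ∈ B, a ∈ act x ∧ 0 < P x a y

/-- End component. -/
def IsEC {σ α : Type*} (act : σ → Finset α) (P : σ → α → σ → ℝ)
    (R : Finset σ) (B : Finset α) : Prop :=
  R.Nonempty ∧ B.Nonempty ∧
  (∀ a ∈ B, ∃ s ∈ R, a ∈ act s) ∧
  (∀ s ∈ R, ∀ a ∈ B, a ∈ act s → ∀ s', 0 < P s a s' → s' ∈ R) ∧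
  (∀ s ∈ R, ∀ s' ∈ R, Relation.ReflTransGen (stepIn act P R B) s s')

/-- Maximal end component. -/
def IsMEC {σ α : Type*} (act : σ → Finset α) (P : σ → α → σ → ℝ)
    (R : Finset σ) (B : Finset α) : Prop :=
  IsEC act P R B ∧
  ∀ R' B', IsEC act P R' B' → R ⊆ R' → B ⊆ B' → R = R' ∧ B = B'

/-- The state space of the collapsed MDP (before restricting to valid states):
original states, representative states `s_{(R_i,B_i)}` (one per collapsed EC), and
the two fresh states `s₊` (`Sum.inr true`) and `s₋` (`Sum.inr false`). -/
abbrev CS (S : Type) (n : ℕ) : Type := (S ⊕ Fin n) ⊕ Bool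

/-- The action alphabet of the collapsed MDP: original actions, the `rem_i`
actions (one per collapsed EC), and the self-loop actions `a₊` (`Sum.inr true`)
and `a₋` (`Sum.inr false`). -/
abbrev CA (A : Type) (n : ℕ) : Type := (A ⊕ Fin n) ⊕ Bool

variable {S A : Type} [Fintype S] [DecidableEq S] [Fintype A] [DecidableEq A] {n : ℕ}

/-- A collapsed state is valid if it is not an original state belonging to one of
the collapsed ECs. -/
def Valid (R : Fin n → Finset S) (x : CS S n) : Prop :=
  ∀ s : S, x = Sum.inl (Sum.inl s) → ∀ i, s ∉ R i

instance {R : Fin n → Finset S} : DecidablePred (Valid R) := fun x =>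
  inferInstanceAs (Decidable (∀ s : S, x = Sum.inl (Sum.inl s) → ∀ i, s ∉ R i))

/-- The state space `S^c` of the collapsed MDP. -/
abbrev CSv (R : Fin n → Finset S) : Type _ := {x : CS S n // Valid R x}

/-- `states(s^c)`: the set of original states represented by a collapsed state. -/
def statesOf (R : Fin n → Finset S) : CS S n → Finset S
  | Sum.inl (Sum.inl s) => {s}
  | Sum.inl (Sum.inr i) => R i
  | Sum.inr _ => ∅

/-- The map `collapsed : S → S^c`, sending a state to its representative if it
belongs to a collapsed EC and to itself otherwise. -/
noncomputable def collapseV (R : Fin n → Finset S) (s : S) : CSv R :=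
  if h : ∃ i, s ∈ R i then
    ⟨Sum.inl (Sum.inr (Classical.choose h)), by intro t ht; simp at ht⟩
  else
    ⟨Sum.inl (Sum.inl s), by
      intro t ht i hi
      simp only [Sum.inl.injEq] at ht
      subst ht
      exact h ⟨i, hi⟩⟩

/-- The terminal states `s₊ = term R true` and `s₋ = term R false` of the
collapsed MDP. -/
def term (R : Fin n → Finset S) (b : Bool) : CSv R :=
  ⟨Sum.inr b, by intro t ht; simp at ht⟩

/-- The representative state `s_{(R_i,B_i)}` of the `i`-th collapsed EC. -/
def repV (R : Fin n → Finset S) (i : Fin n) : CSv R :=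
  ⟨Sum.inl (Sum.inr i), by intro t ht; simp at ht⟩

/-- The available actions `A^c` of the collapsed MDP. -/
noncomputable def cAct (M : MDP S A) (R : Fin n → Finset S) (B : Fin n → Finset A) :
    CSv R → Finset (CA A n) := fun x =>
  match x.1 with
  | Sum.inl (Sum.inl s) => (M.act s).image fun a => Sum.inl (Sum.inl a)
  | Sum.inl (Sum.inr i) =>
      insert (Sum.inl (Sum.inr i))
        (((R i).biUnion M.act \ B i).image fun a => Sum.inl (Sum.inl a))
  | Sum.inr b => {Sum.inr b}

/-- The transition function `Δ^c` of the collapsed MDP: an original action keeps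
its distribution (aggregated over the represented states), `rem_i` moves to `s₊`
or `s₋` according to whether the `i`-th EC contains a target state, and `a₊`, `a₋`
are self-loops. -/
noncomputable def cP (M : MDP S A) (R : Fin n → Finset S) (T : Finset S) :
    CSv R → CA A n → CSv R → ℝ := fun _x a y =>
  match a with
  | Sum.inl (Sum.inl a₀) => ∑ s' ∈ statesOf R y.1, M.P (M.stOf a₀) a₀ s'
  | Sum.inl (Sum.inr i) =>
      if (R i ∩ T).Nonempty then (if y = term R true then 1 else 0)
      else (if y = term R false then 1 else 0)
  | Sum.inr b => if y = term R b then 1 else 0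


/-- Representatives of collapsed MECs belong to no EC of the collapsed MDP. -/
theorem collapsed_mec_not_in_ec (M : MDP S A) (n : ℕ) (R : Fin n → Finset S) (B : Fin n → Finset A)
    (hEC : ∀ i, IsEC M.act M.P (R i) (B i))
    (hdisj : ∀ i j, i ≠ j → Disjoint (R i) (R j))
    (T : Finset S)
    (Mc : MDP (CSv R) (CA A n))
    (Hact : ∀ x, Mc.act x = cAct M R B x)
    (HP : ∀ x a y, Mc.P x a y = cP M R T x a y)
    (I : Finset (Fin n)) (hI : ∀ i ∈ I, IsMEC M.act M.P (R i) (B i))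
    (Rc : Finset (CSv R)) (Bc : Finset (CA A n))
    (hECc : IsEC Mc.act Mc.P Rc Bc) :
    ∀ i ∈ I, repV R i ∉ Rc := by
  intro i hi hrep
  obtain ⟨hRcne, hBcne, hBcav, hclose, hconn⟩ := hECc
  have huniq : ∀ (a₀ : A) (s t : S), a₀ ∈ M.act s → a₀ ∈ M.act t → s = t := fun a₀ s t hs ht =>
    (M.stOf_spec s a₀ hs).symm.trans (M.stOf_spec t a₀ ht)
  -- terminal states are not in Rc
  have hterm : ∀ b : Bool, term R b ∉ Rc := by
    intro b hb
    have key : ∀ y, Relation.ReflTransGen (stepIn Mc.act Mc.P Rc Bc) (term R b) y →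
        y = term R b := by
      intro y hy
      induction hy with
      | refl => rfl
      | @tail m y' h1 h2 ih =>
        rw [ih] at h2
        obtain ⟨-, -, a, haB, haact, hp⟩ := h2
        rw [Hact] at haact
        simp only [cAct, term, Finset.mem_singleton] at haact
        subst haact
        rw [HP] at hp
        simp only [cP] at hp
        by_contra hne
        rw [if_neg hne] at hp
        exact lt_irrefl _ hp
    have := key _ (hconn _ hb _ hrep)
    simp [repV, term, Subtype.ext_iff] at this
  -- every action of Bc is an original action
  have hshape : ∀ a ∈ Bc, ∃ a₀ : A, a = Sum.inl (Sum.inl a₀) := by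
    intro a ha
    obtain ⟨x, hx, hax⟩ := hBcav a ha
    rw [Hact] at hax
    obtain ⟨(s | j) | b, hxv⟩ := x
    · simp only [cAct, Finset.mem_image] at hax
      obtain ⟨a₀, -, rfl⟩ := hax
      exact ⟨a₀, rfl⟩
    · simp only [cAct, Finset.mem_insert, Finset.mem_image] at hax
      rcases hax with rfl | ⟨a₀, -, rfl⟩
      · exfalso
        by_cases hT : (R j ∩ T).Nonempty
        · have hp : 0 < Mc.P ⟨Sum.inl (Sum.inr j), hxv⟩ (Sum.inl (Sum.inr j)) (term R true) := by
            rw [HP]; simp [cP, hT]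
          exact hterm true (hclose _ hx _ ha (by rw [Hact]; simp [cAct]) _ hp)
        · have hp : 0 < Mc.P ⟨Sum.inl (Sum.inr j), hxv⟩ (Sum.inl (Sum.inr j)) (term R false) := by
            rw [HP]; simp [cP, hT]
          exact hterm false (hclose _ hx _ ha (by rw [Hact]; simp [cAct]) _ hp)
      · exact ⟨a₀, rfl⟩
    · exfalso
      exact hterm b (by
        have : term R b = (⟨Sum.inr b, hxv⟩ : CSv R) := Subtype.ext rfl
        rw [this]; exact hx)
  -- the uncollapsed state set and action set
  set R' : Finset S := Rc.biUnion (fun x => statesOf R x.1) with hR'def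
  set B'' : Finset A :=
    (Finset.univ.filter (fun a₀ : A => Sum.inl (Sum.inl a₀) ∈ Bc)) ∪
      ((Finset.univ.filter (fun k : Fin n => repV R k ∈ Rc)).biUnion B) with hB''def
  have hR'mem : ∀ s : S, s ∈ R' ↔ ∃ x ∈ Rc, s ∈ statesOf R x.1 := by
    intro s; rw [hR'def, Finset.mem_biUnion]
  have hRksub : ∀ k, repV R k ∈ Rc → R k ⊆ R' := by
    intro k hk t ht
    exact (hR'mem t).2 ⟨repV R k, hk, by simpa [repV, statesOf] using ht⟩
  have hBksub : ∀ k, repV R k ∈ Rc → B k ⊆ B'' := by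
    intro k hk a ha
    exact Finset.mem_union_right _ (Finset.mem_biUnion.2
      ⟨k, Finset.mem_filter.2 ⟨Finset.mem_univ _, hk⟩, ha⟩)
  have hB'sub : ∀ a₀ : A, Sum.inl (Sum.inl a₀) ∈ Bc → a₀ ∈ B'' := fun a₀ ha =>
    Finset.mem_union_left _ (Finset.mem_filter.2 ⟨Finset.mem_univ _, ha⟩)
  -- actions of Bc are not in the B j of the component where they live
  have hnotB : ∀ a₀ : A, Sum.inl (Sum.inl a₀) ∈ Bc → ∀ s, a₀ ∈ M.act s →
      ∀ j, s ∈ R j → a₀ ∉ B j ∧ repV R j ∈ Rc := by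
    intro a₀ ha s hs j hsj
    obtain ⟨x', hx', hax'⟩ := hBcav _ ha
    rw [Hact] at hax'
    obtain ⟨(t' | j') | b', hxv'⟩ := x'
    · exfalso
      simp only [cAct, Finset.mem_image] at hax'
      obtain ⟨a₁, ha₁, he⟩ := hax'
      simp only [Sum.inl.injEq] at he
      rw [he] at ha₁
      exact hxv' t' rfl j (huniq a₀ s t' hs ha₁ ▸ hsj)
    · simp only [cAct, Finset.mem_insert, Finset.mem_image] at hax'
      rcases hax' with he | ⟨a₁, ha₁, he⟩
      · exact absurd he (by simp)
      · simp only [Sum.inl.injEq] at he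
        rw [he] at ha₁
        rw [Finset.mem_sdiff, Finset.mem_biUnion] at ha₁
        obtain ⟨⟨t₁, ht₁, hat₁⟩, hnB⟩ := ha₁
        have hts : t₁ = s := huniq a₀ t₁ s hat₁ hs
        rw [hts] at ht₁
        have hjj : j' = j := by
          by_contra hne
          exact Finset.disjoint_left.1 (hdisj j' j hne) ht₁ hsj
        refine ⟨hjj ▸ hnB, ?_⟩
        have hxe : (⟨Sum.inl (Sum.inr j'), hxv'⟩ : CSv R) = repV R j :=
          Subtype.ext (show (Sum.inl (Sum.inr j') : CS S n) = Sum.inl (Sum.inr j) by rw [hjj])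
        rw [← hxe]; exact hx'
    · exfalso
      simp only [cAct, Finset.mem_singleton] at hax'
      exact absurd hax' (by simp)
  -- availability in the collapsed MDP
  have hactx : ∀ a₀ : A, Sum.inl (Sum.inl a₀) ∈ Bc → ∀ s, a₀ ∈ M.act s →
      ∀ x : CSv R, x ∈ Rc → s ∈ statesOf R x.1 → Sum.inl (Sum.inl a₀) ∈ Mc.act x := by
    intro a₀ ha s hs x hx hsx
    obtain ⟨(t | j) | b, hxv⟩ := x
    · simp only [statesOf, Finset.mem_singleton] at hsx
      subst hsx
      rw [Hact]
      simp only [cAct, Finset.mem_image]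
      exact ⟨a₀, hs, rfl⟩
    · simp only [statesOf] at hsx
      rw [Hact]
      simp only [cAct, Finset.mem_insert, Finset.mem_image]
      refine Or.inr ⟨a₀, ?_, rfl⟩
      rw [Finset.mem_sdiff, Finset.mem_biUnion]
      exact ⟨⟨s, hsx, hs⟩, (hnotB a₀ ha s hs j hsx).1⟩
    · exact absurd hsx (by simp [statesOf])
  -- the collapse of a state contains it
  have hmemcol : ∀ s' : S, s' ∈ statesOf R (collapseV R s').1 := by
    intro s'
    by_cases h : ∃ k, s' ∈ R k
    · simp only [collapseV, dif_pos h, statesOf]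
      exact Classical.choose_spec h
    · simp only [collapseV, dif_neg h, statesOf, Finset.mem_singleton]
  -- nonemptiness of statesOf on Rc
  have hstne : ∀ x : CSv R, x ∈ Rc → (statesOf R x.1).Nonempty := by
    intro x hx
    obtain ⟨(t | j) | b, hxv⟩ := x
    · exact ⟨t, by simp [statesOf]⟩
    · exact (hEC j).1
    · exfalso
      exact hterm b (by
        have : term R b = (⟨Sum.inr b, hxv⟩ : CSv R) := Subtype.ext rfl
        rw [this]; exact hx)
  -- movement inside a single collapsed state
  have hsame : ∀ x : CSv R, x ∈ Rc → ∀ s ∈ statesOf R x.1, ∀ t ∈ statesOf R x.1,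
      Relation.ReflTransGen (stepIn M.act M.P R' B'') s t := by
    intro x hx s hs t ht
    obtain ⟨(u | j) | b, hxv⟩ := x
    · simp only [statesOf, Finset.mem_singleton] at hs ht
      rw [hs, ht]
    · simp only [statesOf] at hs ht
      have hjRc : repV R j ∈ Rc := by
        have : (⟨Sum.inl (Sum.inr j), hxv⟩ : CSv R) = repV R j := Subtype.ext rfl
        rw [← this]; exact hx
      refine Relation.ReflTransGen.mono ?_ s t ((hEC j).2.2.2.2 s hs t ht)
      rintro u v ⟨hu, hv, a, haB, haact, hp⟩
      exact ⟨hRksub j hjRc hu, hRksub j hjRc hv, a, hBksub j hjRc haB, haact, hp⟩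
    · exact absurd hs (by simp [statesOf])
  -- lifting a single step of the collapsed MDP
  have hstep : ∀ x y : CSv R, stepIn Mc.act Mc.P Rc Bc x y →
      ∀ s ∈ statesOf R x.1, ∀ t ∈ statesOf R y.1,
      Relation.ReflTransGen (stepIn M.act M.P R' B'') s t := by
    intro x y hxy s hs t ht
    obtain ⟨hx, hy, a, haB, haact, hp⟩ := hxy
    obtain ⟨a₀, rfl⟩ := hshape a haB
    rw [HP] at hp
    simp only [cP] at hp
    obtain ⟨s'', hs'', hps''⟩ : ∃ s'' ∈ statesOf R y.1, 0 < M.P (M.stOf a₀) a₀ s'' := by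
      by_contra h
      push_neg at h
      exact absurd hp (not_lt.2 (Finset.sum_nonpos fun u hu => h u hu))
    -- find the source state s₀ of a₀ inside statesOf x
    obtain ⟨s₀, hs₀act, hs₀mem⟩ : ∃ s₀, a₀ ∈ M.act s₀ ∧ s₀ ∈ statesOf R x.1 := by
      rw [Hact] at haact
      obtain ⟨(u | j) | b, hxv⟩ := x
      · simp only [cAct, Finset.mem_image] at haact
        obtain ⟨a₁, ha₁, he⟩ := haact
        simp only [Sum.inl.injEq] at he
        subst he
        exact ⟨u, ha₁, by simp [statesOf]⟩
      · simp only [cAct, Finset.mem_insert, Finset.mem_image] at haact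
        rcases haact with he | ⟨a₁, ha₁, he⟩
        · exact absurd he (by simp)
        · simp only [Sum.inl.injEq] at he
          subst he
          rw [Finset.mem_sdiff, Finset.mem_biUnion] at ha₁
          obtain ⟨⟨t₁, ht₁, hat₁⟩, -⟩ := ha₁
          exact ⟨t₁, hat₁, by simpa [statesOf] using ht₁⟩
      · simp only [cAct, Finset.mem_singleton] at haact
        exact absurd haact (by simp)
    have hst : M.stOf a₀ = s₀ := M.stOf_spec _ _ hs₀act
    rw [hst] at hps''
    have step1 : stepIn M.act M.P R' B'' s₀ s'' :=
      ⟨(hR'mem s₀).2 ⟨x, hx, hs₀mem⟩, (hR'mem s'').2 ⟨y, hy, hs''⟩, a₀,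
        hB'sub a₀ haB, hs₀act, hps''⟩
    exact ((hsame x hx s hs s₀ hs₀mem).trans (Relation.ReflTransGen.head step1
      (hsame y hy s'' hs'' t ht)))
  -- lifting paths
  have hpath : ∀ x y : CSv R, Relation.ReflTransGen (stepIn Mc.act Mc.P Rc Bc) x y →
      x ∈ Rc → ∀ s ∈ statesOf R x.1, ∀ t ∈ statesOf R y.1,
      Relation.ReflTransGen (stepIn M.act M.P R' B'') s t := by
    intro x y hxy hx
    induction hxy with
    | refl => exact fun s hs t ht => hsame x hx s hs t ht
    | @tail m y' h1 h2 ih =>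
      intro s hs t ht
      have hm := h2.1
      obtain ⟨s₀, hs₀⟩ := hstne m hm
      exact (ih s hs s₀ hs₀).trans (hstep m y' h2 s₀ hs₀ t ht)
  -- (R', B'') is an EC of M
  have hECR' : IsEC M.act M.P R' B'' := by
    refine ⟨?_, ?_, ?_, ?_, ?_⟩
    · obtain ⟨s, hs⟩ := (hEC i).1
      exact ⟨s, hRksub i hrep hs⟩
    · obtain ⟨a, ha⟩ := (hEC i).2.1
      exact ⟨a, hBksub i hrep ha⟩
    · intro a ha
      rw [hB''def, Finset.mem_union] at ha
      rcases ha with ha | ha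
      · rw [Finset.mem_filter] at ha
        obtain ⟨x, hx, hax⟩ := hBcav _ ha.2
        rw [Hact] at hax
        obtain ⟨(u | j) | b, hxv⟩ := x
        · simp only [cAct, Finset.mem_image] at hax
          obtain ⟨a₁, ha₁, he⟩ := hax
          simp only [Sum.inl.injEq] at he
          subst he
          exact ⟨u, (hR'mem u).2 ⟨⟨Sum.inl (Sum.inl u), hxv⟩, hx, by simp [statesOf]⟩, ha₁⟩
        · simp only [cAct, Finset.mem_insert, Finset.mem_image] at hax
          rcases hax with he | ⟨a₁, ha₁, he⟩
          · exact absurd he (by simp)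
          · simp only [Sum.inl.injEq] at he
            subst he
            rw [Finset.mem_sdiff, Finset.mem_biUnion] at ha₁
            obtain ⟨⟨t₁, ht₁, hat₁⟩, -⟩ := ha₁
            exact ⟨t₁, (hR'mem t₁).2 ⟨⟨Sum.inl (Sum.inr j), hxv⟩, hx, by simpa [statesOf] using ht₁⟩, hat₁⟩
        · simp only [cAct, Finset.mem_singleton] at hax
          exact absurd hax (by simp)
      · rw [Finset.mem_biUnion] at ha
        obtain ⟨k, hk, hak⟩ := ha
        rw [Finset.mem_filter] at hk
        obtain ⟨t, htk, hat⟩ := (hEC k).2.2.1 a hak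
        exact ⟨t, hRksub k hk.2 htk, hat⟩
    · intro s hsR' a ha hact s' hps'
      rw [hB''def, Finset.mem_union] at ha
      rcases ha with ha | ha
      · rw [Finset.mem_filter] at ha
        obtain ⟨x, hx, hsx⟩ := (hR'mem s).1 hsR'
        have haMc := hactx a ha.2 s hact x hx hsx
        have hpos : 0 < Mc.P x (Sum.inl (Sum.inl a)) (collapseV R s') := by
          rw [HP]
          simp only [cP]
          refine Finset.sum_pos' (fun u _ => M.P_nonneg _ _ _) ⟨s', hmemcol s', ?_⟩
          rw [M.stOf_spec s a hact]
          exact hps'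
        have hy := hclose x hx _ ha.2 haMc _ hpos
        exact (hR'mem s').2 ⟨collapseV R s', hy, hmemcol s'⟩
      · rw [Finset.mem_biUnion] at ha
        obtain ⟨k, hk, hak⟩ := ha
        rw [Finset.mem_filter] at hk
        obtain ⟨t, htk, hat⟩ := (hEC k).2.2.1 a hak
        have : t = s := huniq a t s hat hact
        subst this
        exact hRksub k hk.2 ((hEC k).2.2.2.1 t htk a hak hact s' hps')
    · intro s hs t ht
      obtain ⟨x, hx, hsx⟩ := (hR'mem s).1 hs
      obtain ⟨y, hy, hty⟩ := (hR'mem t).1 ht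
      exact hpath x y (hconn x hx y hy) hx s hsx t hty
  -- maximality
  obtain ⟨hReq, hBeq⟩ := (hI i hi).2 R' B'' hECR' (hRksub i hrep) (hBksub i hrep)
  -- final contradiction: take any action of Bc
  obtain ⟨a, haBc⟩ := hBcne
  obtain ⟨a₀, rfl⟩ := hshape a haBc
  obtain ⟨x, hx, hax⟩ := hBcav _ haBc
  rw [Hact] at hax
  obtain ⟨(u | j) | b, hxv⟩ := x
  · simp only [cAct, Finset.mem_image] at hax
    obtain ⟨a₁, ha₁, he⟩ := hax
    simp only [Sum.inl.injEq] at he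
    subst he
    have huR' : u ∈ R' := (hR'mem u).2 ⟨⟨Sum.inl (Sum.inl u), hxv⟩, hx, by simp [statesOf]⟩
    exact hxv u rfl i (hReq ▸ huR')
  · simp only [cAct, Finset.mem_insert, Finset.mem_image] at hax
    rcases hax with he | ⟨a₁, ha₁, he⟩
    · exact absurd he (by simp)
    · simp only [Sum.inl.injEq] at he
      rw [he] at ha₁
      rw [Finset.mem_sdiff, Finset.mem_biUnion] at ha₁
      obtain ⟨⟨t₁, ht₁, hat₁⟩, hnBj⟩ := ha₁
      have hjRc : repV R j ∈ Rc := by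
        have : (⟨Sum.inl (Sum.inr j), hxv⟩ : CSv R) = repV R j := Subtype.ext rfl
        rw [← this]; exact hx
      have hji : j = i := by
        by_contra hne
        have := hRksub j hjRc ht₁
        rw [← hReq] at this
        exact Finset.disjoint_left.1 (hdisj j i hne) ht₁ this
      subst hji
      have : a₀ ∈ B'' := hB'sub a₀ haBc
      rw [← hBeq] at this
      exact hnBj this
  · simp only [cAct, Finset.mem_singleton] at hax
    exact absurd hax (by simp)
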